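/- Let V ⊂ ℝ² be the set of five vertices of a regular pentagon with side length 1. The minimum, over all partitions of V into exactly 3 nonempty clusters, of the total cost Σ_C w_C equals 1, where for a nonempty finite cluster C the cost is w_C = (1/(2|C|))·Σ_{p∈C} Σ_{q∈C} ‖p−q‖². The minimum is attained by two clusters each consisting of two adjacent vertices plus one singleton cluster. -/

import Mathlib

noncomputable instance : DecidableEq (EuclideanSpace ℝ (Fin 2)) :=
  Classical.decEq _

/-- The vertices of a regular pentagon with side length 1 in the plane. -/
noncomputable def pentagonVertex (m : Fin 5) : EuclideanSpace ℝ (Fin 2) :=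
  (1 / (2 * Real.sin (Real.pi / 5))) •
    (WithLp.equiv 2 (Fin 2 → ℝ)).symm
      ![Real.cos (2 * Real.pi * (m : ℕ) / 5), Real.sin (2 * Real.pi * (m : ℕ) / 5)]

/-- The vertex set of the (standard) regular pentagon with side length 1. -/
noncomputable def pentagonSet : Finset (EuclideanSpace ℝ (Fin 2)) :=
  Finset.image pentagonVertex Finset.univ

/-- The cost of a cluster `C`: `(1/(2|C|))·Σ_{p∈C} Σ_{q∈C} ‖p−q‖²`, which equals the sum
of squared distances from the points of `C` to their centroid. -/
noncomputable def clusterCost (C : Finset (EuclideanSpace ℝ (Fin 2))) : ℝ :=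
  (1 / (2 * (C.card : ℝ))) * ∑ p ∈ C, ∑ q ∈ C, ‖p - q‖ ^ 2

/-- `P` is a partition of `V` into exactly `k` nonempty clusters. -/
def IsPartitionInto (V : Finset (EuclideanSpace ℝ (Fin 2))) (k : ℕ)
    (P : Finset (Finset (EuclideanSpace ℝ (Fin 2)))) : Prop :=
  (∀ C ∈ P, C.Nonempty) ∧ (P : Set (Finset (EuclideanSpace ℝ (Fin 2)))).PairwiseDisjoint id ∧
    P.sup id = V ∧ P.card = k

section Aux
open Real

lemma sqrt5_sq : Real.sqrt 5 ^ 2 = 5 := Real.sq_sqrt (by norm_num)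

lemma sqrt5_lt : Real.sqrt 5 < 3 := by
  nlinarith [sqrt5_sq, Real.sqrt_nonneg 5]

lemma sin_pi5_pos : 0 < Real.sin (π / 5) :=
  Real.sin_pos_of_pos_of_lt_pi (by positivity) (by linarith [Real.pi_pos])

lemma sin_pi5_sq : Real.sin (π / 5) ^ 2 = (5 - Real.sqrt 5) / 8 := by
  have h := Real.sin_sq_add_cos_sq (π / 5)
  rw [Real.cos_pi_div_five] at h
  nlinarith [sqrt5_sq]

lemma cos_2pi5 : Real.cos (2 * (π / 5)) = (Real.sqrt 5 - 1) / 4 := by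
  rw [Real.cos_two_mul, Real.cos_pi_div_five]
  nlinarith [sqrt5_sq]

lemma cos_4pi5 : Real.cos (4 * (π / 5)) = -((1 + Real.sqrt 5) / 4) := by
  rw [show (4:ℝ) * (π/5) = 2 * (2 * (π/5)) by ring, Real.cos_two_mul, cos_2pi5]
  nlinarith [sqrt5_sq]

lemma cos_le_key (n : ℤ) (hn : ¬ ((5:ℤ) ∣ n)) :
    Real.cos (2 * π * n / 5) ≤ (Real.sqrt 5 - 1) / 4 := by
  have hrw : (2 * π * n / 5 : ℝ) = 2 * π * ((n % 5 : ℤ)) / 5 + (n / 5 : ℤ) * (2 * π) := by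
    have h := Int.emod_add_mul_ediv n 5
    have h' : ((n : ℝ)) = ((n % 5 : ℤ) : ℝ) + 5 * ((n / 5 : ℤ) : ℝ) := by
      exact_mod_cast h.symm
    rw [h']; ring
  rw [hrw, Real.cos_add_int_mul_two_pi]
  have h0 : 0 ≤ n % 5 := Int.emod_nonneg n (by norm_num)
  have h5 : n % 5 < 5 := Int.emod_lt_of_pos n (by norm_num)
  have hne : n % 5 ≠ 0 := fun h => hn (Int.dvd_of_emod_eq_zero h)
  interval_cases h : (n % 5)
  · exact absurd rfl hne
  · rw [show (2 * π * ((1:ℤ):ℝ) / 5) = 2 * (π/5) by push_cast; ring, cos_2pi5]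
  · rw [show (2 * π * ((2:ℤ):ℝ) / 5) = 4 * (π/5) by push_cast; ring, cos_4pi5]
    nlinarith [Real.sqrt_nonneg 5]
  · rw [show (2 * π * ((3:ℤ):ℝ) / 5) = 2 * π - 4 * (π/5) by push_cast; ring,
      Real.cos_two_pi_sub, cos_4pi5]
    nlinarith [Real.sqrt_nonneg 5]
  · rw [show (2 * π * ((4:ℤ):ℝ) / 5) = 2 * π - 2 * (π/5) by push_cast; ring,
      Real.cos_two_pi_sub, cos_2pi5]

lemma pv_norm_sub_sq (i j : Fin 5) :
    ‖pentagonVertex i - pentagonVertex j‖ ^ 2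
      = (1 - Real.cos (2 * π * ((i : ℤ) - (j : ℤ)) / 5)) / (2 * Real.sin (π / 5) ^ 2) := by
  have hs := sin_pi5_pos
  set a : ℝ := 2 * π * (i : ℕ) / 5
  set b : ℝ := 2 * π * (j : ℕ) / 5
  have hab : (2 * π * ((i : ℤ) - (j : ℤ)) / 5 : ℝ) = a - b := by
    simp only [a, b]; push_cast; ring
  rw [hab, PiLp.norm_sq_eq_of_L2]
  have hxy : ∀ k : Fin 2, (pentagonVertex i - pentagonVertex j) k
      = (1 / (2 * Real.sin (π / 5))) * (![Real.cos a, Real.sin a] k - ![Real.cos b, Real.sin b] k) := by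
    intro k
    simp [pentagonVertex, a, b, mul_sub]
  rw [Fin.sum_univ_two, hxy 0, hxy 1]
  simp only [Matrix.cons_val_zero, Matrix.cons_val_one, Matrix.head_cons, Real.norm_eq_abs, sq_abs]
  have hc := Real.cos_sub a b
  have h1 := Real.sin_sq_add_cos_sq a
  have h2 := Real.sin_sq_add_cos_sq b
  field_simp
  nlinarith [h1, h2, hc]

lemma not_dvd_sub (i j : Fin 5) (h : i ≠ j) : ¬ ((5:ℤ) ∣ ((i : ℤ) - (j : ℤ))) := by
  have hi := i.isLt
  have hj := j.isLt
  have hne : (i : ℕ) ≠ (j : ℕ) := fun h' => h (Fin.ext h')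
  omega

lemma one_le_normsq (i j : Fin 5) (h : i ≠ j) :
    1 ≤ ‖pentagonVertex i - pentagonVertex j‖ ^ 2 := by
  rw [pv_norm_sub_sq, sin_pi5_sq]
  have hc := cos_le_key ((i : ℤ) - (j : ℤ)) (not_dvd_sub i j h)
  rw [le_div_iff₀ (by nlinarith [sqrt5_lt, Real.sqrt_nonneg 5])]
  push_cast at hc ⊢
  nlinarith [sqrt5_lt]

lemma pv_injective : Function.Injective pentagonVertex := by
  intro i j h
  by_contra hne
  have h1 := one_le_normsq i j hne
  rw [h, sub_self] at h1
  simp only [norm_zero] at h1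
  norm_num at h1

lemma pv_ne (i j : Fin 5) (h : i ≠ j) : pentagonVertex i ≠ pentagonVertex j :=
  fun h' => h (pv_injective h')

lemma normsq_adj (i j : Fin 5) (h : ((i : ℤ) - (j : ℤ)) = -1) :
    ‖pentagonVertex i - pentagonVertex j‖ ^ 2 = 1 := by
  have h' : ((i : ℤ) : ℝ) - ((j : ℤ) : ℝ) = -1 := by exact_mod_cast h
  rw [pv_norm_sub_sq, h', show (2 * π * (-1 : ℝ) / 5) = -(2 * (π / 5)) by ring,
    Real.cos_neg, cos_2pi5, sin_pi5_sq]
  rw [div_eq_one_iff_eq (by nlinarith [sqrt5_lt, Real.sqrt_nonneg 5])]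
  ring


lemma pentagonSet_eq : pentagonSet = {pentagonVertex 0, pentagonVertex 1, pentagonVertex 2,
    pentagonVertex 3, pentagonVertex 4} := by
  ext x
  simp only [pentagonSet, Finset.mem_image, Finset.mem_univ, true_and, Finset.mem_insert,
    Finset.mem_singleton]
  constructor
  · rintro ⟨m, rfl⟩
    fin_cases m <;> simp
  · rintro (rfl | rfl | rfl | rfl | rfl)
    exacts [⟨0, rfl⟩, ⟨1, rfl⟩, ⟨2, rfl⟩, ⟨3, rfl⟩, ⟨4, rfl⟩]

lemma card_pentagonSet : pentagonSet.card = 5 := by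
  rw [pentagonSet, Finset.card_image_of_injective _ pv_injective, Finset.card_univ]
  simp

lemma cost_singleton (p : EuclideanSpace ℝ (Fin 2)) : clusterCost {p} = 0 := by
  simp [clusterCost]

lemma cost_pair (p q : EuclideanSpace ℝ (Fin 2)) (hpq : p ≠ q) :
    clusterCost {p, q} = ‖p - q‖ ^ 2 / 2 := by
  have hcard : ({p, q} : Finset (EuclideanSpace ℝ (Fin 2))).card = 2 := by
    rw [Finset.card_insert_of_notMem (by simpa using hpq), Finset.card_singleton]
  rw [clusterCost, hcard, Finset.sum_pair hpq, Finset.sum_pair hpq, Finset.sum_pair hpq,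
    sub_self, norm_zero, sub_self, norm_zero, norm_sub_rev q p]
  ring

lemma cost_ge (C : Finset (EuclideanSpace ℝ (Fin 2)))
    (hC : ∀ p ∈ C, ∀ q ∈ C, p ≠ q → 1 ≤ ‖p - q‖ ^ 2) :
    ((C.card : ℝ) - 1) / 2 ≤ clusterCost C := by
  rcases C.eq_empty_or_nonempty with rfl | hne
  · simp [clusterCost]
    norm_num
  have hn : 0 < (C.card : ℝ) := by
    exact_mod_cast Finset.card_pos.mpr hne
  have hsum : (C.card : ℝ) * ((C.card : ℝ) - 1) ≤ ∑ p ∈ C, ∑ q ∈ C, ‖p - q‖ ^ 2 := by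
    have hinner : ∀ p ∈ C, ((C.card : ℝ) - 1) ≤ ∑ q ∈ C, ‖p - q‖ ^ 2 := by
      intro p hp
      have h1 : ∑ q ∈ C, (if p = q then (0 : ℝ) else 1) = (C.card : ℝ) - 1 := by
        have : ∀ q ∈ C, (if p = q then (0 : ℝ) else 1) = 1 - (if p = q then 1 else 0) := by
          intro q _; split <;> ring
        rw [Finset.sum_congr rfl this, Finset.sum_sub_distrib, Finset.sum_const,
          Finset.sum_ite_eq C p (fun _ => (1 : ℝ)), if_pos hp, nsmul_eq_mul, mul_one]
      rw [← h1]
      apply Finset.sum_le_sum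
      intro q hq
      by_cases h : p = q
      · simp [h]
      · simp only [if_neg h]
        exact hC p hp q hq h
    calc (C.card : ℝ) * ((C.card : ℝ) - 1) = ∑ _p ∈ C, ((C.card : ℝ) - 1) := by
          rw [Finset.sum_const, nsmul_eq_mul]
      _ ≤ _ := Finset.sum_le_sum hinner
  rw [clusterCost]
  have heq : ((C.card : ℝ) - 1) / 2 = (1 / (2 * (C.card : ℝ))) * ((C.card : ℝ) * ((C.card : ℝ) - 1)) := by
    field_simp
  rw [heq]
  exact mul_le_mul_of_nonneg_left hsum (by positivity)

end Aux

open Finset in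
/-- Partitioning the unit-side regular pentagon's vertices into exactly 3 nonempty
clusters has minimum total cost `1`, attained by two clusters of two adjacent vertices
each plus one singleton. -/
theorem pentagon_three_clusters :
    (IsPartitionInto pentagonSet 3
        {{pentagonVertex 0, pentagonVertex 1}, {pentagonVertex 2, pentagonVertex 3},
          {pentagonVertex 4}} ∧
      ∑ C ∈ ({{pentagonVertex 0, pentagonVertex 1}, {pentagonVertex 2, pentagonVertex 3},
          {pentagonVertex 4}} : Finset (Finset (EuclideanSpace ℝ (Fin 2)))),
        clusterCost C = 1) ∧
      ∀ P : Finset (Finset (EuclideanSpace ℝ (Fin 2))),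
        IsPartitionInto pentagonSet 3 P → 1 ≤ ∑ C ∈ P, clusterCost C := by
  have hne : ∀ i j : Fin 5, i ≠ j → pentagonVertex i ≠ pentagonVertex j := pv_ne
  have h01 : pentagonVertex 0 ≠ pentagonVertex 1 := hne 0 1 (by decide)
  have h23 : pentagonVertex 2 ≠ pentagonVertex 3 := hne 2 3 (by decide)
  -- cluster distinctness
  have hA : ({pentagonVertex 0, pentagonVertex 1} : Finset (EuclideanSpace ℝ (Fin 2)))
      ≠ {pentagonVertex 2, pentagonVertex 3} := by
    intro h
    have : pentagonVertex 0 ∈ ({pentagonVertex 2, pentagonVertex 3} :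
        Finset (EuclideanSpace ℝ (Fin 2))) := h ▸ (by simp)
    simp only [Finset.mem_insert, Finset.mem_singleton] at this
    rcases this with h' | h'
    · exact hne 0 2 (by decide) h'
    · exact hne 0 3 (by decide) h'
  have hB : ({pentagonVertex 0, pentagonVertex 1} : Finset (EuclideanSpace ℝ (Fin 2)))
      ≠ {pentagonVertex 4} := by
    intro h
    have : pentagonVertex 0 ∈ ({pentagonVertex 4} : Finset (EuclideanSpace ℝ (Fin 2))) :=
      h ▸ (by simp)
    simp only [Finset.mem_singleton] at this
    exact hne 0 4 (by decide) this
  have hCn : ({pentagonVertex 2, pentagonVertex 3} : Finset (EuclideanSpace ℝ (Fin 2)))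
      ≠ {pentagonVertex 4} := by
    intro h
    have : pentagonVertex 2 ∈ ({pentagonVertex 4} : Finset (EuclideanSpace ℝ (Fin 2))) :=
      h ▸ (by simp)
    simp only [Finset.mem_singleton] at this
    exact hne 2 4 (by decide) this
  have hd1 : Disjoint ({pentagonVertex 0, pentagonVertex 1} : Finset (EuclideanSpace ℝ (Fin 2)))
      {pentagonVertex 2, pentagonVertex 3} := by
    rw [Finset.disjoint_left]
    intro a ha ha'
    simp only [Finset.mem_insert, Finset.mem_singleton] at ha ha'
    rcases ha with rfl | rfl <;> rcases ha' with h' | h'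
    · exact hne 0 2 (by decide) h'
    · exact hne 0 3 (by decide) h'
    · exact hne 1 2 (by decide) h'
    · exact hne 1 3 (by decide) h'
  have hd2 : Disjoint ({pentagonVertex 0, pentagonVertex 1} : Finset (EuclideanSpace ℝ (Fin 2)))
      {pentagonVertex 4} := by
    rw [Finset.disjoint_left]
    intro a ha ha'
    simp only [Finset.mem_insert, Finset.mem_singleton] at ha ha'
    rcases ha with rfl | rfl
    · exact hne 0 4 (by decide) ha'
    · exact hne 1 4 (by decide) ha'
  have hd3 : Disjoint ({pentagonVertex 2, pentagonVertex 3} : Finset (EuclideanSpace ℝ (Fin 2)))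
      {pentagonVertex 4} := by
    rw [Finset.disjoint_left]
    intro a ha ha'
    simp only [Finset.mem_insert, Finset.mem_singleton] at ha ha'
    rcases ha with rfl | rfl
    · exact hne 2 4 (by decide) ha'
    · exact hne 3 4 (by decide) ha'
  have hmem1 : ({pentagonVertex 0, pentagonVertex 1} : Finset (EuclideanSpace ℝ (Fin 2)))
      ∉ ({{pentagonVertex 2, pentagonVertex 3}, {pentagonVertex 4}} :
        Finset (Finset (EuclideanSpace ℝ (Fin 2)))) := by
    simp only [Finset.mem_insert, Finset.mem_singleton]
    push_neg
    exact ⟨hA, hB⟩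
  have hmem2 : ({pentagonVertex 2, pentagonVertex 3} : Finset (EuclideanSpace ℝ (Fin 2)))
      ∉ ({{pentagonVertex 4}} : Finset (Finset (EuclideanSpace ℝ (Fin 2)))) := by
    simpa using hCn
  refine ⟨⟨⟨?_, ?_, ?_, ?_⟩, ?_⟩, ?_⟩
  · intro C hC
    simp only [Finset.mem_insert, Finset.mem_singleton] at hC
    rcases hC with rfl | rfl | rfl
    · exact Finset.insert_nonempty _ _
    · exact Finset.insert_nonempty _ _
    · exact Finset.singleton_nonempty _
  · intro x hx y hy hxy
    simp only [Finset.coe_insert, Finset.coe_singleton, Set.mem_insert_iff,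
      Set.mem_singleton_iff] at hx hy
    rcases hx with rfl | rfl | rfl <;> rcases hy with rfl | rfl | rfl
    · exact absurd rfl hxy
    · exact hd1
    · exact hd2
    · exact hd1.symm
    · exact absurd rfl hxy
    · exact hd3
    · exact hd2.symm
    · exact hd3.symm
    · exact absurd rfl hxy
  · rw [Finset.sup_insert, Finset.sup_insert, Finset.sup_singleton, id, id, id, pentagonSet_eq]
    ext x
    simp only [Finset.sup_eq_union, Finset.mem_union, Finset.mem_insert, Finset.mem_singleton,
      or_assoc]
  · rw [Finset.card_insert_of_notMem hmem1, Finset.card_insert_of_notMem hmem2,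
      Finset.card_singleton]
  · rw [Finset.sum_insert hmem1, Finset.sum_insert hmem2, Finset.sum_singleton,
      cost_pair _ _ h01, cost_pair _ _ h23, cost_singleton,
      normsq_adj 0 1 (by decide), normsq_adj 2 3 (by decide)]
    norm_num
  · rintro P ⟨hPne, hPdisj, hPsup, hPcard⟩
    have hsub : ∀ C ∈ P, C ⊆ pentagonSet := by
      intro C hC
      rw [← hPsup]
      exact Finset.le_sup (f := id) hC
    have hpoint : ∀ C ∈ P, ∀ p ∈ C, ∀ q ∈ C, p ≠ q → 1 ≤ ‖p - q‖ ^ 2 := by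
      intro C hC p hp q hq hpq
      obtain ⟨i, _, rfl⟩ := Finset.mem_image.mp (hsub C hC hp)
      obtain ⟨j, _, rfl⟩ := Finset.mem_image.mp (hsub C hC hq)
      exact one_le_normsq i j (fun h => hpq (by rw [h]))
    have hcards : ∑ C ∈ P, C.card = 5 := by
      have h := Finset.card_biUnion (s := P) (t := id) (fun x hx y hy hxy => hPdisj hx hy hxy)
      rw [← Finset.sup_eq_biUnion, hPsup, card_pentagonSet] at h
      simpa using h.symm
    calc (1 : ℝ) = ∑ C ∈ P, ((C.card : ℝ) - 1) / 2 := by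
          rw [← Finset.sum_div, Finset.sum_sub_distrib, Finset.sum_const, nsmul_eq_mul, mul_one,
            hPcard]
          have : ∑ C ∈ P, ((C.card : ℝ)) = ((∑ C ∈ P, C.card : ℕ) : ℝ) := by push_cast; rfl
          rw [this, hcards]
          norm_num
      _ ≤ ∑ C ∈ P, clusterCost C := Finset.sum_le_sum fun C hC => cost_ge C (hpoint C hC)
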